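/- Let K = RatFunc ℚ with A = RatFunc.X. Let V be a K-vector space, s : V →ₗ[K] V a K-linear endomorphism, and W ⊆ V a subspace with s(W) ⊆ W. Let m : ℕ and define Δ₋ = A • id - A⁻¹ • s and Δ₊ₘ = A^(4m+1) • s - A⁻¹ • id. If v ∈ V and p, q : ℕ satisfy Δ₊ₘ^p v ∈ W and Δ₋^q v ∈ W, then v ∈ W. -/

import Mathlib

/-- The variable `A` of the field of rational functions `ℚ(A)`. -/
noncomputable def A : RatFunc ℚ := RatFunc.X

lemma A_ne_zero : A ≠ 0 := RatFunc.X_ne_zero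

lemma A_pow_ne_one (n : ℕ) (hn : n ≠ 0) : A ^ n ≠ 1 := by
  intro h
  have h1 : (A ^ n).intDegree = (1 : RatFunc ℚ).intDegree := by rw [h]
  rw [RatFunc.intDegree_one] at h1
  have h2 : (A ^ n).intDegree = n := by
    unfold A
    rw [← RatFunc.algebraMap_X, ← map_pow, RatFunc.intDegree_polynomial,
      Polynomial.natDegree_X_pow]
  omega

lemma key {V : Type*} [AddCommGroup V] [Module (RatFunc ℚ) V]
    (s : Module.End (RatFunc ℚ) V) (W : Submodule (RatFunc ℚ) V)
    (hW : ∀ w ∈ W, s w ∈ W) (m : ℕ) :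
    ∀ n p q v, p + q ≤ n →
      ((A ^ (4 * m + 1) • s - A⁻¹ • (1 : Module.End (RatFunc ℚ) V)) ^ p) v ∈ W →
      ((A • (1 : Module.End (RatFunc ℚ) V) - A⁻¹ • s) ^ q) v ∈ W → v ∈ W := by
  set Dp : Module.End (RatFunc ℚ) V :=
    A ^ (4 * m + 1) • s - A⁻¹ • (1 : Module.End (RatFunc ℚ) V) with hDp
  set Dm : Module.End (RatFunc ℚ) V :=
    A • (1 : Module.End (RatFunc ℚ) V) - A⁻¹ • s with hDm
  have hcomm : Dm * Dp = Dp * Dm := by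
    ext x
    rw [hDp, hDm]
    simp only [Module.End.mul_apply, LinearMap.sub_apply, LinearMap.smul_apply,
      Module.End.one_apply, map_sub, map_smul, smul_sub, smul_smul]
    rw [mul_comm A (A ^ (4 * m + 1)), mul_comm A⁻¹ (A ^ (4 * m + 1)), mul_comm A A⁻¹]
    abel
  have hDpW : ∀ w ∈ W, Dp w ∈ W := by
    intro w hw
    rw [hDp]
    simp only [LinearMap.sub_apply, LinearMap.smul_apply, Module.End.one_apply]
    exact W.sub_mem (W.smul_mem _ (hW w hw)) (W.smul_mem _ hw)
  have hDmW : ∀ w ∈ W, Dm w ∈ W := by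
    intro w hw
    rw [hDm]
    simp only [LinearMap.sub_apply, LinearMap.smul_apply, Module.End.one_apply]
    exact W.sub_mem (W.smul_mem _ hw) (W.smul_mem _ (hW w hw))
  intro n
  induction n with
  | zero =>
    intro p q v hpq hp hq
    have : p = 0 := by omega
    subst this
    simpa using hp
  | succ n ih =>
    intro p q v hpq hp hq
    match p, q with
    | 0, q => simpa using hp
    | p + 1, 0 => simpa using hq
    | p + 1, q + 1 =>
      -- Dp v ∈ W
      have h1 : Dp v ∈ W := by
        apply ih p (q + 1) (Dp v) (by omega)
        · have : (Dp ^ (p + 1)) v = (Dp ^ p) (Dp v) := by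
            rw [pow_succ, Module.End.mul_apply]
          rwa [this] at hp
        · have : (Dm ^ (q + 1)) (Dp v) = Dp ((Dm ^ (q + 1)) v) := by
            rw [← Module.End.mul_apply, ← Module.End.mul_apply,
              (Commute.pow_left hcomm (q + 1))]
          rw [this]
          exact hDpW _ hq
      have h2 : Dm v ∈ W := by
        apply ih (p + 1) q (Dm v) (by omega)
        · have : (Dp ^ (p + 1)) (Dm v) = Dm ((Dp ^ (p + 1)) v) := by
            rw [← Module.End.mul_apply, ← Module.End.mul_apply,
              (Commute.pow_right hcomm (p + 1)).eq]
          rw [this]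
          exact hDmW _ hp
        · have : (Dm ^ (q + 1)) v = (Dm ^ q) (Dm v) := by
            rw [pow_succ, Module.End.mul_apply]
          rwa [this] at hq
      -- linear combination
      have hc : (A ^ (4 * m + 2) - A⁻¹ * A⁻¹ : RatFunc ℚ) ≠ 0 := by
        intro h
        apply A_pow_ne_one (4 * m + 4) (by omega)
        have hA := A_ne_zero
        field_simp at h
        rw [mul_zero, sub_eq_zero] at h
        rw [← h]; ring
      have hv : (A ^ (4 * m + 2) - A⁻¹ * A⁻¹ : RatFunc ℚ) • v
          = A⁻¹ • Dp v + A ^ (4 * m + 1) • Dm v := by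
        rw [hDp, hDm]
        simp only [LinearMap.sub_apply, LinearMap.smul_apply, Module.End.one_apply,
          smul_sub, smul_smul, sub_smul]
        have hA := A_ne_zero
        have e1 : A⁻¹ * A ^ (4 * m + 1) = A ^ (4 * m + 1) * A⁻¹ := by ring
        have e2 : A ^ (4 * m + 1) * A = A ^ (4 * m + 2) := by ring
        rw [e1, e2]
        abel
      have := W.add_mem (W.smul_mem A⁻¹ h1) (W.smul_mem (A ^ (4 * m + 1)) h2)
      rw [← hv] at this
      have := W.smul_mem (A ^ (4 * m + 2) - A⁻¹ * A⁻¹)⁻¹ this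
      rwa [smul_smul, inv_mul_cancel₀ hc, one_smul] at this

/-- If `Δ₊ₘ^p v` and `Δ₋^q v` lie in an `s`-invariant subspace `W`, then `v ∈ W`. -/
theorem stmt_5 {V : Type*} [AddCommGroup V] [Module (RatFunc ℚ) V]
    (s : Module.End (RatFunc ℚ) V) (W : Submodule (RatFunc ℚ) V)
    (hW : ∀ w ∈ W, s w ∈ W) (m : ℕ) (v : V) (p q : ℕ)
    (hp : ((A ^ (4 * m + 1) • s - A⁻¹ • (1 : Module.End (RatFunc ℚ) V)) ^ p) v ∈ W)
    (hq : ((A • (1 : Module.End (RatFunc ℚ) V) - A⁻¹ • s) ^ q) v ∈ W) :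
    v ∈ W := key s W hW m (p + q) p q v le_rfl hp hq
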